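/- Let Σ be a finite complete simplicial fan in N, σ ∈ Σ with dim σ ≥ 2, and x an element of the relative interior of σ which generates the semigroup (ℝ_{≥0} x) ∩ N. If P ∈ PC(Σ) and G(σ) ⊆ P, then (P ∖ G(σ)) ∪ {x} is a primitive collection of the star subdivision Σ*_{(σ,x)}. -/

import Mathlib

noncomputable section

open Finset

/-- The real vector space `N_ℝ` for the lattice `N = ℤ^d`. -/
abbrev NR (d : ℕ) := Fin d → ℝ

/-- The canonical map from the lattice `N = ℤ^d` to `N_ℝ`. -/
def toNR {d : ℕ} (x : Fin d → ℤ) : NR d := fun i => (x i : ℝ)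

/-- The convex cone generated by a set: all finite nonnegative real combinations. -/
def coneOf {d : ℕ} (S : Set (NR d)) : Set (NR d) :=
  { y | ∃ (n : ℕ) (c : Fin n → ℝ) (v : Fin n → NR d),
      (∀ i, 0 ≤ c i) ∧ (∀ i, v i ∈ S) ∧ y = ∑ i, c i • v i }

/-- `τ` is a face of the cone `σ`, cut out by a linear functional nonnegative on `σ`. -/
def IsFaceOf {d : ℕ} (τ σ : Set (NR d)) : Prop :=
  ∃ u : NR d →ₗ[ℝ] ℝ, (∀ x ∈ σ, 0 ≤ u x) ∧ τ = {x ∈ σ | u x = 0}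

/-- A rational polyhedral cone: generated by finitely many lattice points. -/
def IsRationalPolyhedralCone {d : ℕ} (σ : Set (NR d)) : Prop :=
  ∃ S : Finset (Fin d → ℤ), σ = coneOf (toNR '' (↑S : Set (Fin d → ℤ)))

/-- A pointed (strongly convex) cone. -/
def IsPointedCone {d : ℕ} (σ : Set (NR d)) : Prop :=
  ∀ x ∈ σ, -x ∈ σ → x = 0

/-- A primitive lattice vector. -/
def IsPrimitive {d : ℕ} (x : Fin d → ℤ) : Prop :=
  x ≠ 0 ∧ ∀ (k : ℤ) (y : Fin d → ℤ), x = k • y → k = 1 ∨ k = -1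

/-- The dimension of a cone. -/
def coneDim {d : ℕ} (σ : Set (NR d)) : ℕ :=
  Module.finrank ℝ ↥(Submodule.span ℝ σ)

/-- A (finite) fan in `N = ℤ^d`: a finite collection of rational pointed polyhedral
cones, closed under taking faces, such that the intersection of any two cones is a
face of each. -/
structure Fan (d : ℕ) where
  cones : Set (Set (NR d))
  finite : cones.Finite
  rational : ∀ σ ∈ cones, IsRationalPolyhedralCone σ
  pointed : ∀ σ ∈ cones, IsPointedCone σ
  face_mem : ∀ σ ∈ cones, ∀ τ : Set (NR d), IsFaceOf τ σ → τ ∈ cones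
  inter_face : ∀ σ ∈ cones, ∀ τ ∈ cones, IsFaceOf (σ ∩ τ) σ

namespace Fan

variable {d : ℕ}

/-- A complete fan. -/
def IsComplete (F : Fan d) : Prop := ⋃₀ F.cones = Set.univ

/-- A simplicial fan: every cone is generated by linearly independent vectors. -/
def IsSimplicial (F : Fan d) : Prop :=
  ∀ σ ∈ F.cones, ∃ S : Finset (Fin d → ℤ),
    LinearIndependent ℝ (fun v : ↥(toNR '' (↑S : Set (Fin d → ℤ))) => (v : NR d)) ∧
    σ = coneOf (toNR '' (↑S : Set (Fin d → ℤ)))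

/-- A nonsingular fan: every cone is generated by part of a `ℤ`-basis of `N`. -/
def IsNonsingular (F : Fan d) : Prop :=
  ∀ σ ∈ F.cones, ∃ (b : Module.Basis (Fin d) ℤ (Fin d → ℤ)) (t : Set (Fin d)),
    σ = coneOf (toNR '' (⇑b '' t))

/-- `G(Σ)`: the set of primitive generators of the rays of a fan. -/
def genSet (F : Fan d) : Set (Fin d → ℤ) :=
  { x | IsPrimitive x ∧ coneOf {toNR x} ∈ F.cones }

/-- `G(σ) = σ ∩ G(Σ)`. -/
def coneGens (F : Fan d) (σ : Set (NR d)) : Set (Fin d → ℤ) :=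
  { x ∈ F.genSet | toNR x ∈ σ }

/-- A primitive collection of a fan. -/
def IsPrimitiveCollection (F : Fan d) (P : Finset (Fin d → ℤ)) : Prop :=
  P.Nonempty ∧ (↑P : Set (Fin d → ℤ)) ⊆ F.genSet ∧
    coneOf (toNR '' (↑P : Set (Fin d → ℤ))) ∉ F.cones ∧
    ∀ x ∈ P, coneOf (toNR '' ((↑P : Set (Fin d → ℤ)) \ {x})) ∈ F.cones

/-- `IsPrimRel F P Y a`: `P` is a primitive collection of `F` whose primitive relation is
`∑_{x ∈ P} x = ∑_{y ∈ Y} (a y) • y`, where `Y = G(σ(P))` and `σ(P)` is the unique cone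
whose relative interior contains `∑_{x ∈ P} x`, and the coefficients `a y` are positive. -/
def IsPrimRel (F : Fan d) (P Y : Finset (Fin d → ℤ)) (a : (Fin d → ℤ) → ℤ) : Prop :=
  F.IsPrimitiveCollection P ∧
  ∃ σ ∈ F.cones, (↑Y : Set (Fin d → ℤ)) = F.coneGens σ ∧
    toNR (∑ x ∈ P, x) ∈ intrinsicInterior ℝ σ ∧
    (∀ y ∈ Y, 0 < a y) ∧ (∑ x ∈ P, x) = ∑ y ∈ Y, a y • y

/-- A Fano fan: a finite complete nonsingular fan with `deg P > 0` for every
primitive collection `P` (so its toric variety is a nonsingular toric Fano `d`-fold). -/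
def IsFanoFan (F : Fan d) : Prop :=
  F.IsComplete ∧ F.IsNonsingular ∧
    ∀ P Y a, F.IsPrimRel P Y a → ∑ y ∈ Y, a y < (P.card : ℤ)

/-- The collection of cones of the star subdivision of `F` along `(σ, x)`. -/
def starSub (F : Fan d) (σ : Set (NR d)) (x : Fin d → ℤ) : Set (Set (NR d)) :=
  { τ ∈ F.cones | ¬ IsFaceOf σ τ } ∪
  { ρ | ∃ τ ∈ F.cones, IsFaceOf σ τ ∧ ∃ xi ∈ F.coneGens σ,
      IsFaceOf ρ (coneOf (toNR ''
        (insert x ((F.coneGens τ \ F.coneGens σ) ∪ (F.coneGens σ \ {xi}))))) }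

/-- `F'` is the star subdivision of `F` along `(σ, x)`. -/
def IsStarSubdivisionOf (F' F : Fan d) (σ : Set (NR d)) (x : Fin d → ℤ) : Prop :=
  F'.cones = F.starSub σ x

/-- `F'` is an equivariant blow-up of `F`: the star subdivision along a cone `σ` (with at
least two generators) and the sum of the elements of `G(σ)`. -/
def IsBlowupOf (F' F : Fan d) : Prop :=
  ∃ σ ∈ F.cones, ∃ S : Finset (Fin d → ℤ),
    (↑S : Set (Fin d → ℤ)) = F.coneGens σ ∧ 2 ≤ S.card ∧
    F'.IsStarSubdivisionOf F σ (∑ y ∈ S, y)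

/-- One step of F-equivalence: an equivariant blow-up or blow-down between Fano fans. -/
def FStep (F G : Fan d) : Prop :=
  F.IsFanoFan ∧ G.IsFanoFan ∧ (G.IsBlowupOf F ∨ F.IsBlowupOf G)

/-- F-equivalence of Fano fans. -/
def FEquiv : Fan d → Fan d → Prop := Relation.ReflTransGen FStep

/-- A splitting fan: any two distinct primitive collections are disjoint. -/
def IsSplittingFan (F : Fan d) : Prop :=
  F.IsComplete ∧ F.IsNonsingular ∧
    ∀ P Q, F.IsPrimitiveCollection P → F.IsPrimitiveCollection Q → P ≠ Q →
      ∀ x ∈ P, x ∉ Q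

/-- Data of a wall relation: `τ` is a wall (a `(d-1)`-dimensional cone) with
`G(τ) = Z`, `z_d = zd`, `z_{d+1} = zd1` the generators of the two maximal cones
containing `τ`, and `∑_{z ∈ Z} (b z) • z + zd + zd1 = 0`.  The anticanonical degree of
the corresponding invariant curve is `∑_{z ∈ Z} b z + 2`. -/
def IsWallRel (F : Fan d) (τ : Set (NR d)) (Z : Finset (Fin d → ℤ))
    (zd zd1 : Fin d → ℤ) (b : (Fin d → ℤ) → ℤ) : Prop :=
  τ ∈ F.cones ∧ coneDim τ = d - 1 ∧ (↑Z : Set (Fin d → ℤ)) = F.coneGens τ ∧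
    zd ∈ F.genSet ∧ zd1 ∈ F.genSet ∧ zd ≠ zd1 ∧ zd ∉ Z ∧ zd1 ∉ Z ∧
    coneOf (toNR '' (insert zd (↑Z : Set (Fin d → ℤ)))) ∈ F.cones ∧
    coneOf (toNR '' (insert zd1 (↑Z : Set (Fin d → ℤ)))) ∈ F.cones ∧
    (∑ z ∈ Z, b z • z) + zd + zd1 = 0

end Fan

/-- The fan of a product of projective spaces `P^{a 0} × ⋯ × P^{a (r-1)}`. -/
def IsProdProjFan {d r : ℕ} (F : Fan d) (a : Fin r → ℕ) : Prop :=
  ∃ e : (j : Fin r) → Fin (a j + 1) → (Fin d → ℤ),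
    (∀ j, ∑ i, e j i = 0) ∧
    (∃ b : Module.Basis ((j : Fin r) × Fin (a j)) ℤ (Fin d → ℤ),
       ∀ (j : Fin r) (i : Fin (a j)), e j i.castSucc = b ⟨j, i⟩) ∧
    F.cones = { σ | ∃ s : (j : Fin r) → Finset (Fin (a j + 1)),
        (∀ j, s j ≠ Finset.univ) ∧
        σ = coneOf (toNR '' (⋃ j, (e j) '' (↑(s j) : Set (Fin (a j + 1))))) }

/-- The fan of the projective space `P^d`. -/
def IsProjFan {d : ℕ} (F : Fan d) : Prop := IsProdProjFan F (fun _ : Fin 1 => d)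

/-- The lattice points of `N_ℝ`. -/
def latticePts (d : ℕ) : Set (NR d) := Set.range (toNR (d := d))

/-- `F` is, up to a unimodular identification, the product of the fans `F₁` and `F₂`. -/
def IsProductOf {d d₁ d₂ : ℕ} (F : Fan d) (F₁ : Fan d₁) (F₂ : Fan d₂) : Prop :=
  ∃ φ : NR d ≃ₗ[ℝ] NR d₁ × NR d₂,
    (⇑φ '' latticePts d = (latticePts d₁) ×ˢ (latticePts d₂)) ∧
    F.cones = { σ | ∃ σ₁ ∈ F₁.cones, ∃ σ₂ ∈ F₂.cones, ⇑φ '' σ = σ₁ ×ˢ σ₂ }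

/-- `δ` is a nonempty proper face of the polytope `Δ`. -/
def IsProperPolytopeFace {d : ℕ} (δ Δ : Set (NR d)) : Prop :=
  δ.Nonempty ∧ δ ≠ Δ ∧ ∃ (u : NR d →ₗ[ℝ] ℝ) (c : ℝ),
    (∀ x ∈ Δ, u x ≤ c) ∧ δ = {x ∈ Δ | u x = c}

/-- The collection of cones over the proper faces of the polytope `Conv(V)`
(together with the zero cone). -/
def polytopeFaceFan {d : ℕ} (V : Set (NR d)) : Set (Set (NR d)) :=
  insert ({0} : Set (NR d))
    { σ | ∃ δ : Set (NR d), IsProperPolytopeFace δ (convexHull ℝ V) ∧ σ = coneOf δ }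

/-- The four-dimensional del Pezzo fan `V⁴` (up to unimodular equivalence). -/
def IsDelPezzoFan4 (F : Fan 4) : Prop :=
  ∃ b : Module.Basis (Fin 4) ℤ (Fin 4 → ℤ),
    F.cones = polytopeFaceFan (toNR ''
      ((Set.range ⇑b) ∪ (Set.range fun i => -b i) ∪ {(∑ i, b i), -(∑ i, b i)}))

/-- The four-dimensional pseudo del Pezzo fan `Ṽ⁴` (up to unimodular equivalence). -/
def IsPseudoDelPezzoFan4 (F : Fan 4) : Prop :=
  ∃ b : Module.Basis (Fin 4) ℤ (Fin 4 → ℤ),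
    F.cones = polytopeFaceFan (toNR ''
      ((Set.range ⇑b) ∪ (Set.range fun i => -b i) ∪ {∑ i, b i}))

/-- An equivariant blow-up of a 3-dimensional fan at an invariant point: star subdivision
along a 3-dimensional cone and the sum of its three generators. -/
def PointBlowup3 (F' F : Fan 3) : Prop :=
  ∃ σ ∈ F.cones, ∃ S : Finset (Fin 3 → ℤ),
    (↑S : Set (Fin 3 → ℤ)) = F.coneGens σ ∧ S.card = 3 ∧
    F'.IsStarSubdivisionOf F σ (∑ y ∈ S, y)

/-- An equivariant blow-up of a 3-dimensional fan along an invariant curve: star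
subdivision along a 2-dimensional cone and the sum of its two generators. -/
def CurveBlowup3 (F' F : Fan 3) : Prop :=
  ∃ σ ∈ F.cones, ∃ S : Finset (Fin 3 → ℤ),
    (↑S : Set (Fin 3 → ℤ)) = F.coneGens σ ∧ S.card = 2 ∧
    F'.IsStarSubdivisionOf F σ (∑ y ∈ S, y)

section StarAux

open Finset

variable {d : ℕ}

lemma toNR_injective : Function.Injective (toNR (d := d)) := by
  intro a b h
  funext i
  have := congrFun h i; simp only [toNR] at this; exact_mod_cast this

@[simp] lemma toNR_eq_zero {x : Fin d → ℤ} : toNR x = 0 ↔ x = 0 := by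
  constructor
  · intro h; funext i
    have := congrFun h i; simp only [toNR, Pi.zero_apply] at this
    exact_mod_cast this
  · rintro rfl; funext i; simp [toNR]

lemma toNR_zsmul (k : ℤ) (x : Fin d → ℤ) : toNR (k • x) = (k : ℝ) • toNR x := by
  funext i; simp [toNR]

lemma zero_mem_coneOf (S : Set (NR d)) : (0 : NR d) ∈ coneOf S :=
  ⟨0, 0, fun i => i.elim0, fun i => le_rfl, fun i => i.elim0, by simp⟩

lemma subset_coneOf (S : Set (NR d)) : S ⊆ coneOf S := fun x hx =>
  ⟨1, fun _ => 1, fun _ => x, fun _ => zero_le_one, fun _ => hx, by simp⟩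

lemma smul_mem_coneOf {S : Set (NR d)} {y : NR d} {t : ℝ} (ht : 0 ≤ t)
    (hy : y ∈ coneOf S) : t • y ∈ coneOf S := by
  obtain ⟨n, c, v, hc, hv, rfl⟩ := hy
  exact ⟨n, fun i => t * c i, v, fun i => mul_nonneg ht (hc i), hv, by
    rw [Finset.smul_sum]; simp [smul_smul]⟩

lemma add_mem_coneOf {S : Set (NR d)} {y z : NR d} (hy : y ∈ coneOf S)
    (hz : z ∈ coneOf S) : y + z ∈ coneOf S := by
  obtain ⟨n, c, v, hc, hv, rfl⟩ := hy
  obtain ⟨m, e, w, he, hw, rfl⟩ := hz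
  refine ⟨n + m, Fin.addCases c e, Fin.addCases v w, ?_, ?_, ?_⟩
  · intro i
    refine Fin.addCases (fun j => by simp [hc j]) (fun j => by simp [he j]) i
  · intro i
    refine Fin.addCases (fun j => by simp [hv j]) (fun j => by simp [hw j]) i
  · rw [Fin.sum_univ_add]
    simp

lemma sum_mem_coneOf {S : Set (NR d)} {ι : Type*} (t : Finset ι) (f : ι → NR d)
    (hf : ∀ i ∈ t, f i ∈ coneOf S) : ∑ i ∈ t, f i ∈ coneOf S := by
  classical
  induction t using Finset.induction with
  | empty => simpa using zero_mem_coneOf S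
  | insert _ _ h ih =>
    rw [Finset.sum_insert h]
    exact add_mem_coneOf (hf _ (Finset.mem_insert_self _ _))
      (ih fun i hi => hf i (Finset.mem_insert_of_mem hi))

lemma coneOf_subset_coneOf {S T : Set (NR d)} (h : S ⊆ coneOf T) :
    coneOf S ⊆ coneOf T := by
  rintro y ⟨n, c, v, hc, hv, rfl⟩
  exact sum_mem_coneOf Finset.univ _ fun i _ => smul_mem_coneOf (hc i) (h (hv i))

lemma coneOf_mono {S T : Set (NR d)} (h : S ⊆ T) : coneOf S ⊆ coneOf T :=
  coneOf_subset_coneOf (h.trans (subset_coneOf T))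

lemma span_coneOf (S : Set (NR d)) :
    Submodule.span ℝ (coneOf S) = Submodule.span ℝ S := by
  apply le_antisymm
  · rw [Submodule.span_le]
    rintro y ⟨n, c, v, hc, hv, rfl⟩
    exact Submodule.sum_mem _ fun i _ =>
      Submodule.smul_mem _ _ (Submodule.subset_span (hv i))
  · exact Submodule.span_mono (subset_coneOf S)

lemma mem_coneOf_finset {V : Finset (NR d)} {y : NR d} :
    y ∈ coneOf (↑V : Set (NR d)) ↔
    ∃ c : NR d → ℝ, (∀ v ∈ V, 0 ≤ c v) ∧ y = ∑ v ∈ V, c v • v := by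
  classical
  constructor
  · rintro ⟨n, c, v, hc, hv, rfl⟩
    refine ⟨fun w => ∑ i ∈ Finset.univ.filter (fun i => v i = w), c i,
      fun w _ => Finset.sum_nonneg fun i _ => hc i, ?_⟩
    rw [← Finset.sum_fiberwise_of_maps_to (g := v) (t := V)
      (fun i _ => by exact_mod_cast hv i) (fun i => c i • v i)]
    refine Finset.sum_congr rfl fun w hw => ?_
    rw [Finset.sum_smul]
    refine Finset.sum_congr rfl fun i hi => ?_
    rw [(Finset.mem_filter.1 hi).2]
  · rintro ⟨c, hc, rfl⟩
    exact sum_mem_coneOf V _ fun v hv =>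
      smul_mem_coneOf (hc v hv) (subset_coneOf _ hv)

lemma mem_coneOf_image {S : Finset (Fin d → ℤ)} {y : NR d} :
    y ∈ coneOf (toNR '' (↑S : Set (Fin d → ℤ))) ↔
    ∃ c : (Fin d → ℤ) → ℝ, (∀ s ∈ S, 0 ≤ c s) ∧ y = ∑ s ∈ S, c s • toNR s := by
  classical
  have himg : toNR '' (↑S : Set (Fin d → ℤ)) = ↑(S.image toNR) := by
    simp [Finset.coe_image]
  rw [himg, mem_coneOf_finset]
  constructor
  · rintro ⟨c, hc, rfl⟩
    refine ⟨fun s => c (toNR s), fun s hs => hc _ (Finset.mem_image_of_mem _ hs), ?_⟩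
    rw [Finset.sum_image (fun a _ b _ h => toNR_injective h)]
  · rintro ⟨c, hc, rfl⟩
    refine ⟨fun w => ∑ s ∈ S.filter (fun s => toNR s = w), c s, ?_, ?_⟩
    · intro w _; exact Finset.sum_nonneg fun s hs =>
        hc s (Finset.mem_filter.1 hs).1
    · rw [← Finset.sum_fiberwise_of_maps_to (g := toNR) (t := S.image toNR)
        (fun s hs => Finset.mem_image_of_mem _ hs) (fun s => c s • toNR s)]
      refine Finset.sum_congr rfl fun w hw => ?_
      rw [Finset.sum_smul]
      refine Finset.sum_congr rfl fun s hs => ?_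
      rw [(Finset.mem_filter.1 hs).2]

/-- linear independence of a finite set of vectors, as used in `Fan.IsSimplicial`. -/
def LIset (V : Set (NR d)) : Prop := LinearIndependent ℝ (fun v : ↥V => (v : NR d))

lemma sum_setCoe {α β : Type*} [AddCommMonoid β] (V : Finset α) (f : α → β) :
    ∑ i : ↥(↑V : Set α), f ↑i = ∑ v ∈ V, f v :=
  Finset.sum_coe_sort V f

lemma liz {V : Finset (NR d)} (h : LIset (↑V : Set (NR d)))
    {f : NR d → ℝ} (hf : ∑ v ∈ V, f v • v = 0) : ∀ v ∈ V, f v = 0 := by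
  classical
  rw [LIset, Fintype.linearIndependent_iff] at h
  intro v hv
  refine h (fun w => f (w : NR d)) ?_ ⟨v, hv⟩
  exact (sum_setCoe V (fun v => f v • v)).trans hf

lemma lizZ {S : Finset (Fin d → ℤ)} (h : LIset (toNR '' (↑S : Set (Fin d → ℤ))))
    {f : (Fin d → ℤ) → ℝ} (hf : ∑ s ∈ S, f s • toNR s = 0) : ∀ s ∈ S, f s = 0 := by
  classical
  have himg : toNR '' (↑S : Set (Fin d → ℤ)) = ↑(S.image toNR) := by
    simp [Finset.coe_image]
  rw [himg] at h
  set fR : NR d → ℝ := fun v => f (Function.invFun toNR v) with hfR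
  have hinv : ∀ s : Fin d → ℤ, Function.invFun toNR (toNR s) = s :=
    Function.leftInverse_invFun toNR_injective
  have hsum : ∑ w ∈ S.image toNR, fR w • w = 0 := by
    rw [Finset.sum_image (fun a _ b _ hab => toNR_injective hab)]
    rw [← hf]
    refine Finset.sum_congr rfl fun s _ => ?_
    rw [hfR]
    simp only []
    rw [hinv s]
  intro s hsm
  have := liz h hsum (toNR s) (Finset.mem_image_of_mem _ hsm)
  rw [hfR] at this
  simp only [] at this
  rwa [hinv s] at this

lemma liz_unique {V : Finset (NR d)} (h : LIset (↑V : Set (NR d))) {f g : NR d → ℝ}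
    (hfg : ∑ v ∈ V, f v • v = ∑ v ∈ V, g v • v) : ∀ v ∈ V, f v = g v := by
  intro v hv
  have h2 : f v - g v = 0 := liz h (f := fun w => f w - g w) (by
    simp only [sub_smul, Finset.sum_sub_distrib, hfg, sub_self]) v hv
  linarith

lemma not_mem_span_erase {V : Finset (NR d)} (h : LIset (↑V : Set (NR d)))
    {v : NR d} (hv : v ∈ V) :
    v ∉ Submodule.span ℝ (↑(V.erase v) : Set (NR d)) := by
  classical
  intro hmem
  rw [Submodule.mem_span_finset] at hmem
  obtain ⟨f, -, hf⟩ := hmem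
  have h0 : ∑ w ∈ V, (if w = v then (-1 : ℝ) else f w) • w = 0 := by
    rw [← Finset.insert_erase hv, Finset.sum_insert (Finset.notMem_erase _ _)]
    rw [if_pos rfl, Finset.sum_congr rfl (fun w hw => by
      rw [if_neg (Finset.ne_of_mem_erase hw)]), hf]
    simp
  have := liz h h0 v hv
  simp at this

lemma smul_image_indep {V : Finset (NR d)} (h : LIset (↑V : Set (NR d)))
    (φ : NR d → NR d) (hφ : ∀ v ∈ V, ∃ t : ℝ, t ≠ 0 ∧ φ v = t • v) :
    LIset (↑(V.image φ) : Set (NR d)) := by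
  classical
  choose t ht0 htφ using hφ
  set t' : NR d → ℝ := fun v => if hv : v ∈ V then t v hv else 1 with ht'
  have ht'0 : ∀ v ∈ V, t' v ≠ 0 := fun v hv => by rw [ht']; simp [hv]; exact ht0 v hv
  have ht'φ : ∀ v ∈ V, φ v = t' v • v := fun v hv => by rw [ht']; simp [hv]; exact htφ v hv
  have hinj : ∀ v ∈ V, ∀ w ∈ V, φ v = φ w → v = w := by
    intro v hv w hw he
    by_contra hne
    have hs1 : ∑ u ∈ V, (if u = v then t' v else 0) • u
        = ∑ u ∈ V, (if u = w then t' w else 0) • u := by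
      rw [Finset.sum_eq_single_of_mem v hv
        (fun b _ hb => by rw [if_neg hb, zero_smul]), if_pos rfl]
      rw [Finset.sum_eq_single_of_mem w hw
        (fun b _ hb => by rw [if_neg hb, zero_smul]), if_pos rfl]
      rw [← ht'φ v hv, ← ht'φ w hw, he]
    have := liz_unique h hs1 v hv
    rw [if_pos rfl, if_neg hne] at this
    exact ht'0 v hv this
  rw [LIset, Fintype.linearIndependent_iff]
  intro g hg
  classical
  set G : NR d → ℝ :=
    fun u => if hu : u ∈ (↑(V.image φ) : Set (NR d)) then g ⟨u, hu⟩ else 0 with hGdef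
  have hGeq : ∀ (i : ↥(↑(V.image φ) : Set (NR d))), G (i : NR d) = g i := by
    intro i
    rw [hGdef]
    simp only [i.2, dif_pos]
  have hGsum : ∑ w ∈ V.image φ, G w • w = 0 := by
    rw [← hg]
    rw [← sum_setCoe (V.image φ) (fun w => G w • w)]
    refine Finset.sum_congr rfl fun i _ => by rw [hGeq i]
  have hVsum : ∑ v ∈ V, (G (φ v) * t' v) • v = 0 := by
    rw [← hGsum, Finset.sum_image hinj]
    refine (Finset.sum_congr rfl fun v hv => ?_).symm
    rw [ht'φ v hv, smul_smul]
  have hzero : ∀ v ∈ V, G (φ v) = 0 := by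
    intro v hv
    have := liz h hVsum v hv
    exact (mul_eq_zero.1 this).resolve_right (ht'0 v hv)
  intro i
  rw [← hGeq i]
  obtain ⟨v, hv, hveq⟩ := Finset.mem_image.1 (show (i : NR d) ∈ V.image φ from i.2)
  rw [← hveq]
  exact hzero v hv

lemma exists_dual {S T : Finset (Fin d → ℤ)} (hTS : T ⊆ S)
    (h : LIset (toNR '' (↑S : Set (Fin d → ℤ)))) :
    ∃ u : NR d →ₗ[ℝ] ℝ, ∀ s ∈ S, u (toNR s) = if s ∈ T then 0 else 1 := by
  classical
  have hmem : ∀ s ∈ S, toNR s ∈ LinearIndepOn.extend (show LinearIndepOn ℝ id (toNR '' (↑S : Set (Fin d → ℤ))) from h) (Set.subset_univ _) := fun s hs =>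
    Module.Basis.subset_extend (show LinearIndepOn ℝ id (toNR '' (↑S : Set (Fin d → ℤ))) from h) ⟨s, hs, rfl⟩
  set b := Module.Basis.extend (show LinearIndepOn ℝ id (toNR '' (↑S : Set (Fin d → ℤ))) from h) with hb
  refine ⟨∑ p ∈ (S \ T).attach,
    b.coord ⟨toNR p.1, hmem p.1 (Finset.mem_sdiff.1 p.2).1⟩, fun s hs => ?_⟩
  have happ : ∀ (s' : Fin d → ℤ) (hs' : s' ∈ S),
      b.coord ⟨toNR s', hmem s' hs'⟩ (toNR s) = if s' = s then 1 else 0 := by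
    intro s' hs'
    have hbs : toNR s = b ⟨toNR s, hmem s hs⟩ :=
      (Module.Basis.extend_apply_self (show LinearIndepOn ℝ id (toNR '' (↑S : Set (Fin d → ℤ))) from h) ⟨toNR s, hmem s hs⟩).symm
    rw [Module.Basis.coord_apply, hbs, Module.Basis.repr_self_apply]
    by_cases hss : s' = s
    · subst hss; rw [if_pos rfl, if_pos rfl]
    · rw [if_neg (by simp [Subtype.ext_iff]; intro hc; exact hss (toNR_injective hc).symm),
        if_neg hss]
  rw [LinearMap.coe_sum, Finset.sum_apply]
  have : ∀ p ∈ (S \ T).attach,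
      b.coord ⟨toNR p.1, hmem p.1 (Finset.mem_sdiff.1 p.2).1⟩ (toNR s)
      = if p.1 = s then (1 : ℝ) else 0 := fun p _ =>
    happ p.1 (Finset.mem_sdiff.1 p.2).1
  rw [Finset.sum_congr rfl this, Finset.sum_attach (S \ T) (fun q => if q = s then (1:ℝ) else 0),
    Finset.sum_ite_eq' (S \ T) s (fun _ => (1:ℝ))]
  by_cases hsT : s ∈ T
  · rw [if_neg (by simp [hsT]), if_pos hsT]
  · rw [if_pos (Finset.mem_sdiff.2 ⟨hs, hsT⟩), if_neg hsT]

lemma isFaceOf_coneOf_subset {S T : Finset (Fin d → ℤ)} (hTS : T ⊆ S)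
    (h : LIset (toNR '' (↑S : Set (Fin d → ℤ)))) :
    IsFaceOf (coneOf (toNR '' (↑T : Set (Fin d → ℤ))))
      (coneOf (toNR '' (↑S : Set (Fin d → ℤ)))) := by
  classical
  obtain ⟨u, hu⟩ := exists_dual hTS h
  refine ⟨u, ?_, ?_⟩
  · intro y hy
    rw [mem_coneOf_image] at hy
    obtain ⟨c, hc, rfl⟩ := hy
    rw [map_sum]
    refine Finset.sum_nonneg fun s hs => ?_
    rw [map_smul, smul_eq_mul, hu s hs]
    by_cases hsT : s ∈ T
    · rw [if_pos hsT, mul_zero]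
    · rw [if_neg hsT, mul_one]; exact hc s hs
  · ext y
    constructor
    · intro hy
      have hyS : y ∈ coneOf (toNR '' (↑S : Set (Fin d → ℤ))) :=
        coneOf_mono (Set.image_mono (by exact_mod_cast hTS)) hy
      refine ⟨hyS, ?_⟩
      rw [mem_coneOf_image] at hy
      obtain ⟨c, hc, rfl⟩ := hy
      rw [map_sum]
      refine Finset.sum_eq_zero fun s hs => ?_
      rw [map_smul, smul_eq_mul, hu s (hTS hs), if_pos hs, mul_zero]
    · rintro ⟨hyS, hy0⟩
      rw [mem_coneOf_image] at hyS
      obtain ⟨c, hc, hy⟩ := hyS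
      subst hy
      rw [map_sum] at hy0
      have hterm : ∀ s ∈ S, 0 ≤ u (c s • toNR s) := by
        intro s hs
        rw [map_smul, smul_eq_mul, hu s hs]
        by_cases hsT : s ∈ T
        · rw [if_pos hsT, mul_zero]
        · rw [if_neg hsT, mul_one]; exact hc s hs
      have hzero := (Finset.sum_eq_zero_iff_of_nonneg hterm).1 hy0
      rw [mem_coneOf_image]
      refine ⟨c, fun s hs => hc s (hTS hs), ?_⟩
      refine (Finset.sum_subset hTS fun s hs hsT => ?_).symm
      have := hzero s hs
      rw [map_smul, smul_eq_mul, hu s hs, if_neg hsT, mul_one] at this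
      rw [this, zero_smul]

lemma face_eq_coneOf_filter {S : Finset (Fin d → ℤ)} {ρ : Set (NR d)}
    (hface : IsFaceOf ρ (coneOf (toNR '' (↑S : Set (Fin d → ℤ))))) :
    ∃ T : Finset (Fin d → ℤ), T ⊆ S ∧ ρ = coneOf (toNR '' (↑T : Set (Fin d → ℤ))) := by
  classical
  obtain ⟨u, hu, rfl⟩ := hface
  have hgen : ∀ s ∈ S, 0 ≤ u (toNR s) := fun s hs =>
    hu _ (subset_coneOf _ ⟨s, hs, rfl⟩)
  refine ⟨S.filter (fun s => u (toNR s) = 0), Finset.filter_subset _ _, ?_⟩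
  ext y
  constructor
  · rintro ⟨hyS, hy0⟩
    rw [mem_coneOf_image] at hyS
    obtain ⟨c, hc, hy⟩ := hyS
    subst hy
    rw [map_sum] at hy0
    have hterm : ∀ s ∈ S, 0 ≤ u (c s • toNR s) := by
      intro s hs
      rw [map_smul, smul_eq_mul]
      exact mul_nonneg (hc s hs) (hgen s hs)
    have hzero := (Finset.sum_eq_zero_iff_of_nonneg hterm).1 hy0
    rw [mem_coneOf_image]
    refine ⟨c, fun s hs => hc s (Finset.mem_filter.1 hs).1, ?_⟩
    refine (Finset.sum_subset (Finset.filter_subset _ _) fun s hs hsf => ?_).symm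
    rcases mul_eq_zero.1 (by
        have := hzero s hs
        rwa [map_smul, smul_eq_mul] at this) with hc0 | hu0
    · rw [hc0, zero_smul]
    · exact absurd (Finset.mem_filter.2 ⟨hs, hu0⟩) hsf
  · intro hy
    have hyS : y ∈ coneOf (toNR '' (↑S : Set (Fin d → ℤ))) :=
      coneOf_mono (Set.image_mono (by
        exact_mod_cast Finset.filter_subset _ S)) hy
    refine ⟨hyS, ?_⟩
    rw [mem_coneOf_image] at hy
    obtain ⟨c, hc, rfl⟩ := hy
    rw [map_sum]
    refine Finset.sum_eq_zero fun s hs => ?_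
    rw [map_smul, smul_eq_mul, (Finset.mem_filter.1 hs).2, mul_zero]

lemma mem_coneOf_singleton {v y : NR d} :
    y ∈ coneOf {v} ↔ ∃ c : ℝ, 0 ≤ c ∧ y = c • v := by
  constructor
  · rintro ⟨n, c, w, hc, hw, rfl⟩
    refine ⟨∑ i, c i, Finset.sum_nonneg fun i _ => hc i, ?_⟩
    rw [Finset.sum_smul]
    exact Finset.sum_congr rfl fun i _ => by rw [hw i]
  · rintro ⟨c, hc, rfl⟩
    exact smul_mem_coneOf hc (subset_coneOf _ rfl)

lemma coneOf_singleton_smul {v : NR d} {t : ℝ} (ht : 0 < t) :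
    coneOf {t • v} = coneOf {v} := by
  apply Set.Subset.antisymm
  · exact coneOf_subset_coneOf (by
      rintro w rfl
      exact smul_mem_coneOf ht.le (subset_coneOf _ rfl))
  · refine coneOf_subset_coneOf ?_
    rintro w rfl
    rw [mem_coneOf_singleton]
    exact ⟨t⁻¹, by positivity, by rw [smul_smul, inv_mul_cancel₀ ht.ne', one_smul]⟩

lemma gcd_nonneg' (s : Fin d → ℤ) : 0 ≤ Finset.univ.gcd s :=
  Int.nonneg_of_normalize_eq_self Finset.normalize_gcd

/-- The primitive vector on the ray of a nonzero lattice vector. -/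
def primOf (s : Fin d → ℤ) : Fin d → ℤ := fun i => s i / Finset.univ.gcd s

lemma primOf_spec {s : Fin d → ℤ} (hs : s ≠ 0) :
    0 < Finset.univ.gcd s ∧ s = (Finset.univ.gcd s) • primOf s ∧ IsPrimitive (primOf s) := by
  classical
  set g := Finset.univ.gcd s with hg
  have hg0 : g ≠ 0 := by
    rw [hg]
    intro hc
    rw [Finset.gcd_eq_zero_iff] at hc
    exact hs (funext fun i => hc i (Finset.mem_univ i))
  have hgpos : 0 < g := lt_of_le_of_ne (gcd_nonneg' s) (Ne.symm hg0)
  have hdvd : ∀ i, g ∣ s i := fun i => Finset.gcd_dvd (Finset.mem_univ i)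
  have hsg : s = g • primOf s := by
    funext i
    simp only [Pi.smul_apply, smul_eq_mul, primOf]
    rw [Int.mul_ediv_cancel' (hdvd i)]
  refine ⟨hgpos, hsg, ?_, ?_⟩
  · intro hc
    rw [hc, smul_zero] at hsg
    exact hs hsg
  · intro k y hky
    have hdvdk : ∀ i, k ∣ primOf s i := fun i => ⟨y i, congrFun hky i⟩
    have hk : k ∣ Finset.univ.gcd (primOf s) :=
      Finset.dvd_gcd fun i _ => hdvdk i
    have hgp : Finset.univ.gcd (primOf s) = 1 := by
      have hfun : s = fun i => g * primOf s i := by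
        funext i
        have := congrFun hsg i
        simpa using this
      have h1 : g = g * Finset.univ.gcd (primOf s) := by
        conv_lhs => rw [hg, hfun]
        rw [Finset.gcd_mul_left, Int.normalize_of_nonneg hgpos.le]
      exact (mul_left_cancel₀ hg0 (by rw [← h1, mul_one])).symm
    rw [hgp] at hk
    exact Int.isUnit_iff.1 (isUnit_of_dvd_one hk)

lemma primitive_gcd_one {z : Fin d → ℤ} (hz : IsPrimitive z) :
    Finset.univ.gcd z = 1 := by
  obtain ⟨hgpos, hsg, _⟩ := primOf_spec hz.1
  rcases hz.2 _ _ hsg with h1 | h1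
  · exact h1
  · omega

/-- A lattice vector which is a nonnegative real multiple of a primitive vector is a
natural multiple of it. -/
lemma lattice_mul {z s : Fin d → ℤ} (hz : IsPrimitive z) {c : ℝ}
    (hc : 0 ≤ c) (he : toNR s = c • toNR z) : ∃ k : ℕ, s = (k : ℤ) • z := by
  classical
  have hcoord : ∀ i, (s i : ℝ) = c * (z i : ℝ) := fun i => by
    have := congrFun he i
    simpa [toNR] using this
  by_cases hs0 : s = 0
  · exact ⟨0, by simpa using hs0⟩
  have hc0 : c ≠ 0 := by
    intro hcc
    apply hs0
    funext i
    have := hcoord i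
    rw [hcc, zero_mul] at this
    exact_mod_cast this
  have hcpos : 0 < c := lt_of_le_of_ne hc hc0.symm
  obtain ⟨j, hj⟩ : ∃ j, z j ≠ 0 := by
    by_contra hcon
    push_neg at hcon
    exact hz.1 (funext hcon)
  have hcross : ∀ i, s i * z j = s j * z i := by
    intro i
    have : ((s i * z j : ℤ) : ℝ) = ((s j * z i : ℤ) : ℝ) := by
      push_cast
      rw [hcoord i, hcoord j]
      ring
    exact_mod_cast this
  have hsj : s j ≠ 0 := by
    intro hcc
    have := hcoord j
    rw [hcc] at this
    have : c * (z j : ℝ) = 0 := by exact_mod_cast this.symm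
    rcases mul_eq_zero.1 this with h | h
    · exact hc0 h
    · exact hj (by exact_mod_cast h)
  set p := s j with hp
  set q := z j with hq
  set g : ℤ := (Int.gcd p q : ℤ) with hgdef
  have hgpos : (0 : ℤ) < g := by
    rw [hgdef]
    have : p.gcd q ≠ 0 := fun hcon => hsj (Int.gcd_eq_zero_iff.1 hcon).1
    exact_mod_cast Nat.pos_of_ne_zero this
  have hpdvd : g ∣ p := Int.gcd_dvd_left _ _
  have hqdvd : g ∣ q := Int.gcd_dvd_right _ _
  set p' := p / g with hp'
  set q' := q / g with hq'
  have hpp : p = g * p' := (Int.mul_ediv_cancel' hpdvd).symm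
  have hqq : q = g * q' := (Int.mul_ediv_cancel' hqdvd).symm
  have hcop : Int.gcd p' q' = 1 := by
    rw [hp', hq', hgdef]
    refine Int.gcd_div_gcd_div_gcd ?_
    have := hgpos
    rw [hgdef] at this
    exact_mod_cast this
  have hcross' : ∀ i, s i * q' = p' * z i := by
    intro i
    have h1 : g * (s i * q') = g * (p' * z i) := by
      have hthis := hcross i
      rw [hpp, hqq] at hthis
      linear_combination hthis
    exact mul_left_cancel₀ hgpos.ne' h1
  have hq'dvd : ∀ i, q' ∣ z i := by
    intro i
    have hdvd : q' ∣ p' * z i := ⟨s i, by rw [← hcross' i]; ring⟩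
    have hcop' : IsCoprime (q' : ℤ) p' := by
      rw [Int.isCoprime_iff_gcd_eq_one, Int.gcd_comm]
      exact hcop
    exact hcop'.dvd_of_dvd_mul_left hdvd
  have hzq : z = q' • (fun i => z i / q') := by
    funext i
    simp only [Pi.smul_apply, smul_eq_mul]
    rw [Int.mul_ediv_cancel' (hq'dvd i)]
  have hq'unit : q' = 1 ∨ q' = -1 := hz.2 _ _ hzq
  have hq'sq : q' * q' = 1 := by rcases hq'unit with h | h <;> rw [h] <;> ring
  have hseq : s = (p' * q') • z := by
    funext i
    simp only [Pi.smul_apply, smul_eq_mul]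
    linear_combination q' * hcross' i - s i * hq'sq
  have hpqpos : 0 < p' * q' := by
    have hq2 : (0 : ℝ) < (q : ℝ) * (q : ℝ) := by
      have hqne : (q : ℝ) ≠ 0 := by exact_mod_cast hj
      exact mul_self_pos.2 hqne
    have hpq : (0 : ℝ) < (p : ℝ) * q := by
      rw [show ((p : ℝ)) = c * (q : ℝ) from by rw [hp, hq]; exact hcoord j]
      calc (0:ℝ) < c * ((q : ℝ) * (q : ℝ)) := mul_pos hcpos hq2
        _ = c * (q:ℝ) * (q:ℝ) := by ring
    have hpqZ : 0 < p * q := by exact_mod_cast hpq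
    rw [hpp, hqq] at hpqZ
    have hrw : g * p' * (g * q') = (g * g) * (p' * q') := by ring
    rw [hrw] at hpqZ
    nlinarith [mul_pos hgpos hgpos, hpqZ]
  exact ⟨(p' * q').toNat, by rw [Int.toNat_of_nonneg hpqpos.le]; exact hseq⟩

lemma prim_unique {z s : Fin d → ℤ} (hz : IsPrimitive z) (hs : IsPrimitive s) {c : ℝ}
    (hc : 0 ≤ c) (he : toNR s = c • toNR z) : s = z := by
  obtain ⟨k, hk⟩ := lattice_mul hz hc he
  rcases hs.2 _ _ hk with h1 | h1
  · rw [hk, h1, one_smul]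
  · exfalso; omega

lemma coneOf_empty : coneOf (∅ : Set (NR d)) = {0} := by
  apply Set.Subset.antisymm
  · rintro y ⟨n, c, v, hc, hv, rfl⟩
    rcases Nat.eq_zero_or_pos n with hn | hn
    · subst hn; simp
    · exact absurd (hv ⟨0, hn⟩) (Set.notMem_empty _)
  · rintro y rfl
    exact zero_mem_coneOf _

lemma IsFaceOf.subset' {τ σ : Set (NR d)} (h : IsFaceOf τ σ) : τ ⊆ σ := by
  obtain ⟨u, hu, rfl⟩ := h
  exact fun z hz => hz.1

lemma isFaceOf_self {σ : Set (NR d)} : IsFaceOf σ σ :=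
  ⟨0, fun z _ => le_rfl, by ext z; simp⟩

/-- A supporting functional vanishing at a relative interior point vanishes identically. -/
lemma relint_forces_zero {σ : Set (NR d)} (h0 : (0 : NR d) ∈ σ)
    {x : NR d} (hx : x ∈ intrinsicInterior ℝ σ)
    (u : NR d →ₗ[ℝ] ℝ) (hu : ∀ z ∈ σ, 0 ≤ u z) (hux : u x = 0) :
    ∀ z ∈ σ, u z = 0 := by
  intro z hz
  rw [intrinsicInterior] at hx
  obtain ⟨y, hy, rfl⟩ := hx
  rw [mem_interior_iff_mem_nhds, Metric.mem_nhds_iff] at hy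
  obtain ⟨ε, hε, hball⟩ := hy
  set t := ε / (2 * (‖z‖ + 1)) with htdef
  have hznorm : (0:ℝ) < ‖z‖ + 1 := by positivity
  have ht : 0 < t := by positivity
  have hmem : (↑y : NR d) - t • z ∈ affineSpan ℝ σ := by
    have h1 : (↑y : NR d) ∈ affineSpan ℝ σ := y.2
    have h2 : z ∈ affineSpan ℝ σ := subset_affineSpan ℝ σ hz
    have h3 : (0 : NR d) ∈ affineSpan ℝ σ := subset_affineSpan ℝ σ h0
    have := AffineSubspace.smul_vsub_vadd_mem (affineSpan ℝ σ) t h3 h2 h1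
    simpa [vsub_eq_sub, vadd_eq_add, smul_sub, sub_eq_add_neg, add_comm] using this
  have hdist : t * ‖z‖ < ε := by
    rw [htdef, div_mul_eq_mul_div, div_lt_iff₀ (by positivity)]
    nlinarith [norm_nonneg z, hε]
  have hball' : (⟨(↑y : NR d) - t • z, hmem⟩ : ↥(affineSpan ℝ σ)) ∈ Metric.ball y ε := by
    rw [Metric.mem_ball, Subtype.dist_eq, dist_eq_norm]
    have : (↑y : NR d) - t • z - ↑y = -(t • z) := by ring_nf
    rw [this, norm_neg, norm_smul, Real.norm_eq_abs, abs_of_pos ht]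
    exact hdist
  have hwσ : (↑y : NR d) - t • z ∈ σ := hball hball'
  have h1 : 0 ≤ u ((↑y : NR d) - t • z) := hu _ hwσ
  rw [map_sub, map_smul, hux, smul_eq_mul] at h1
  have h2 : 0 ≤ u z := hu z hz
  nlinarith

lemma primOf_nsmul_primitive {z : Fin d → ℤ} (hz : IsPrimitive z) {k : ℤ}
    (hk : 0 < k) : primOf (k • z) = z := by
  have hgcd : Finset.univ.gcd (k • z) = k := by
    have hfun : k • z = fun i => k * z i := by funext i; simp
    rw [hfun, Finset.gcd_mul_left, primitive_gcd_one hz, mul_one,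
      Int.normalize_of_nonneg hk.le]
  funext i
  simp only [primOf, hgcd, Pi.smul_apply, smul_eq_mul]
  exact Int.mul_ediv_cancel_left _ hk.ne'

/-- Structure of the cones of a simplicial fan: every cone is generated by its
set of primitive ray generators, which map to a linearly independent set. -/
lemma coneGens_struct {F : Fan d} (hs : F.IsSimplicial) {ρ : Set (NR d)}
    (hρ : ρ ∈ F.cones) :
    ∃ S : Finset (Fin d → ℤ), (↑S : Set (Fin d → ℤ)) = F.coneGens ρ ∧
      LIset (toNR '' (↑S : Set (Fin d → ℤ))) ∧
      ρ = coneOf (toNR '' (↑S : Set (Fin d → ℤ))) := by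
  classical
  obtain ⟨S₀, hLI, hρeq⟩ := hs ρ hρ
  have hne : ∀ s ∈ S₀, s ≠ 0 := by
    intro s hsmem hs0
    have : toNR s ≠ 0 := hLI.ne_zero ⟨toNR s, ⟨s, hsmem, rfl⟩⟩
    exact this (toNR_eq_zero.2 hs0)
  set S := S₀.image primOf with hSdef
  have hkey : ∀ s ∈ S₀, 0 < Finset.univ.gcd s ∧ s = (Finset.univ.gcd s) • primOf s ∧
      IsPrimitive (primOf s) := fun s hsm => primOf_spec (hne s hsm)
  have htoNR : ∀ s ∈ S₀, toNR (primOf s) = (((Finset.univ.gcd s : ℤ) : ℝ))⁻¹ • toNR s := by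
    intro s hsm
    obtain ⟨hg, hsg, _⟩ := hkey s hsm
    have h1 : toNR s = ((Finset.univ.gcd s : ℤ) : ℝ) • toNR (primOf s) := by
      conv_lhs => rw [hsg]
      exact toNR_zsmul _ _
    rw [h1, smul_smul, inv_mul_cancel₀ (by exact_mod_cast hg.ne'), one_smul]
  -- the singleton rays are faces, hence cones of F
  have hrayF : ∀ s ∈ S₀, coneOf {toNR s} ∈ F.cones := by
    intro s hsm
    have hface := isFaceOf_coneOf_subset (T := {s}) (S := S₀)
      (Finset.singleton_subset_iff.2 hsm) hLI
    have himg : (toNR '' (↑({s} : Finset (Fin d → ℤ)) : Set (Fin d → ℤ))) = {toNR s} := by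
      simp
    rw [himg, ← hρeq] at hface
    exact F.face_mem ρ hρ _ hface
  have hrayprimF : ∀ s ∈ S₀, coneOf {toNR (primOf s)} ∈ F.cones := by
    intro s hsm
    obtain ⟨hg, hsg, _⟩ := hkey s hsm
    have : coneOf {toNR (primOf s)} = coneOf {toNR s} := by
      have h1 : toNR s = ((Finset.univ.gcd s : ℤ) : ℝ) • toNR (primOf s) := by
        conv_lhs => rw [hsg]; exact toNR_zsmul _ _
      rw [h1, coneOf_singleton_smul (by exact_mod_cast hg)]
    rw [this]
    exact hrayF s hsm
  have hprimρ : ∀ s ∈ S₀, toNR (primOf s) ∈ ρ := by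
    intro s hsm
    rw [htoNR s hsm, hρeq]
    have hg := (hkey s hsm).1
    exact smul_mem_coneOf (inv_nonneg.2 (by exact_mod_cast hg.le))
      (subset_coneOf _ ⟨s, hsm, rfl⟩)
  have hSsub : (↑S : Set (Fin d → ℤ)) ⊆ F.coneGens ρ := by
    rintro p hp
    obtain ⟨s, hsm, rfl⟩ := Finset.mem_image.1 hp
    exact ⟨⟨(hkey s hsm).2.2, hrayprimF s hsm⟩, hprimρ s hsm⟩
  have hρS : ρ = coneOf (toNR '' (↑S : Set (Fin d → ℤ))) := by
    apply Set.Subset.antisymm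
    · rw [hρeq]
      apply coneOf_subset_coneOf
      rintro w ⟨s, hsm, rfl⟩
      have hsm' : s ∈ S₀ := hsm
      obtain ⟨hg, hsg, _⟩ := hkey s hsm'
      have h1 : toNR s = ((Finset.univ.gcd s : ℤ) : ℝ) • toNR (primOf s) := by
        conv_lhs => rw [hsg]; exact toNR_zsmul _ _
      rw [h1]
      exact smul_mem_coneOf (by exact_mod_cast hg.le)
        (subset_coneOf _ ⟨primOf s, Finset.mem_image_of_mem _ hsm', rfl⟩)
    · rw [hρeq]
      apply coneOf_subset_coneOf
      rintro w ⟨p, hp, rfl⟩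
      obtain ⟨sx, hsm, rfl⟩ := Finset.mem_image.1 (Finset.mem_coe.1 hp)
      have := hprimρ sx hsm
      rwa [hρeq] at this
  -- linear independence of the primitive generators
  have hLI' : LIset (toNR '' (↑S : Set (Fin d → ℤ))) := by
    have hVeq : toNR '' (↑S₀ : Set (Fin d → ℤ)) = ↑(S₀.image toNR) := by
      simp [Finset.coe_image]
    have hLI0 : LIset (↑(S₀.image toNR) : Set (NR d)) := by
      rw [← hVeq]; exact hLI
    set φ : NR d → NR d := fun v =>
      if h : ∃ s, s ∈ S₀ ∧ toNR s = v
      then (((Finset.univ.gcd h.choose : ℤ) : ℝ))⁻¹ • v else v with hφdef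
    have hφval : ∀ s ∈ S₀, φ (toNR s) = toNR (primOf s) := by
      intro s hsm
      have hex : ∃ s', s' ∈ S₀ ∧ toNR s' = toNR s := ⟨s, hsm, rfl⟩
      have hch : hex.choose = s := toNR_injective hex.choose_spec.2
      rw [hφdef]
      simp only [dif_pos hex]
      rw [hch, htoNR s hsm]
    have hφt : ∀ v ∈ S₀.image toNR, ∃ t : ℝ, t ≠ 0 ∧ φ v = t • v := by
      intro v hv
      obtain ⟨s, hsm, rfl⟩ := Finset.mem_image.1 hv
      obtain ⟨hg, _, _⟩ := hkey s hsm
      refine ⟨(((Finset.univ.gcd s : ℤ) : ℝ))⁻¹, ?_, by rw [hφval s hsm, htoNR s hsm]⟩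
      have : ((Finset.univ.gcd s : ℤ) : ℝ) ≠ 0 := by exact_mod_cast hg.ne'
      exact inv_ne_zero this
    have hres := smul_image_indep hLI0 φ hφt
    have himg : (S₀.image toNR).image φ = S.image toNR := by
      rw [hSdef, Finset.image_image, Finset.image_image]
      exact Finset.image_congr fun s hsm => hφval s hsm
    rw [himg] at hres
    have : toNR '' (↑S : Set (Fin d → ℤ)) = ↑(S.image toNR) := by
      simp [Finset.coe_image]
    rw [this]
    exact hres
  refine ⟨S, ?_, hLI', hρS⟩
  apply Set.Subset.antisymm hSsub
  -- coneGens ρ ⊆ S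
  rintro z ⟨⟨hzprim, hzray⟩, hzρ⟩
  have hraysub : coneOf {toNR z} ⊆ ρ := by
    rw [hρeq]
    exact coneOf_subset_coneOf (by
      rintro w rfl
      rw [← hρeq]; exact hzρ)
  have hface : IsFaceOf (coneOf {toNR z}) ρ := by
    have := F.inter_face ρ hρ _ hzray
    rwa [Set.inter_eq_self_of_subset_right hraysub] at this
  rw [hρeq] at hface
  obtain ⟨T, hTS, hTeq⟩ := face_eq_coneOf_filter hface
  have hzmem : toNR z ∈ coneOf (toNR '' (↑T : Set (Fin d → ℤ))) := by
    rw [← hTeq]; exact subset_coneOf _ rfl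
  rw [mem_coneOf_image] at hzmem
  obtain ⟨c, hc, hzc⟩ := hzmem
  have hTne : T.Nonempty := by
    by_contra hcon
    rw [Finset.not_nonempty_iff_eq_empty] at hcon
    subst hcon
    rw [Finset.sum_empty] at hzc
    exact hzprim.1 (by rwa [← toNR_eq_zero])
  obtain ⟨s, hsT⟩ := hTne
  have hsS0 : s ∈ S₀ := hTS hsT
  have hsray : toNR s ∈ coneOf {toNR z} := by
    rw [hTeq]
    exact subset_coneOf _ ⟨s, hsT, rfl⟩
  rw [mem_coneOf_singleton] at hsray
  obtain ⟨cc, hcc, hceq⟩ := hsray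
  obtain ⟨k, hk⟩ := lattice_mul hzprim hcc hceq
  have hkpos : (0:ℤ) < (k : ℤ) := by
    rcases Nat.eq_zero_or_pos k with h0 | h0
    · exfalso
      apply hne s hsS0
      rw [hk, h0]; simp
    · exact_mod_cast h0
  have : primOf s = z := by rw [hk]; exact primOf_nsmul_primitive hzprim hkpos
  rw [hSdef]
  exact Finset.mem_coe.2 (Finset.mem_image.2 ⟨s, hsS0, this⟩)

/-- If a finset of primitive generators generates a cone of the fan, it is exactly the
set of its ray generators. -/
lemma coneGens_eq_self {F : Fan d} (hs : F.IsSimplicial) {Q : Finset (Fin d → ℤ)}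
    (hQ : (↑Q : Set (Fin d → ℤ)) ⊆ F.genSet)
    (hmem : coneOf (toNR '' (↑Q : Set (Fin d → ℤ))) ∈ F.cones) :
    (↑Q : Set (Fin d → ℤ)) = F.coneGens (coneOf (toNR '' (↑Q : Set (Fin d → ℤ)))) ∧
      LIset (toNR '' (↑Q : Set (Fin d → ℤ))) := by
  classical
  have hmain : (↑Q : Set (Fin d → ℤ)) =
      F.coneGens (coneOf (toNR '' (↑Q : Set (Fin d → ℤ)))) := by
    apply Set.Subset.antisymm
    · intro q hq
      exact ⟨hQ hq, subset_coneOf _ ⟨q, hq, rfl⟩⟩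
    · rintro z ⟨⟨hzprim, hzray⟩, hzρ⟩
      have hraysub : coneOf {toNR z} ⊆ coneOf (toNR '' (↑Q : Set (Fin d → ℤ))) :=
        coneOf_subset_coneOf (by rintro w rfl; exact hzρ)
      have hface : IsFaceOf (coneOf {toNR z}) (coneOf (toNR '' (↑Q : Set (Fin d → ℤ)))) := by
        have := F.inter_face _ hmem _ hzray
        rwa [Set.inter_eq_self_of_subset_right hraysub] at this
      obtain ⟨T, hTQ, hTeq⟩ := face_eq_coneOf_filter hface
      have hzmem : toNR z ∈ coneOf (toNR '' (↑T : Set (Fin d → ℤ))) := by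
        rw [← hTeq]; exact subset_coneOf _ rfl
      rw [mem_coneOf_image] at hzmem
      obtain ⟨c, hc, hzc⟩ := hzmem
      have hTne : T.Nonempty := by
        by_contra hcon
        rw [Finset.not_nonempty_iff_eq_empty] at hcon
        subst hcon
        rw [Finset.sum_empty] at hzc
        exact hzprim.1 (by rwa [← toNR_eq_zero])
      obtain ⟨s, hsT⟩ := hTne
      have hsQ : s ∈ Q := hTQ hsT
      have hsray : toNR s ∈ coneOf {toNR z} := by
        rw [hTeq]
        exact subset_coneOf _ ⟨s, hsT, rfl⟩
      rw [mem_coneOf_singleton] at hsray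
      obtain ⟨cc, hcc, hceq⟩ := hsray
      have : s = z := prim_unique hzprim (hQ hsQ).1 hcc hceq
      rw [← this]
      exact hsQ
  refine ⟨hmain, ?_⟩
  obtain ⟨S, hSeq, hSLI, hSρ⟩ := coneGens_struct hs hmem
  have : S = Q := Finset.coe_injective (by rw [hSeq, ← hmain])
  rwa [this] at hSLI

end StarAux

/-- If `P` is a primitive collection of `Σ` containing `G(σ)`, then
`(P ∖ G(σ)) ∪ {x}` is a primitive collection of the star subdivision. -/
theorem primitiveCollection_starSubdivision_of_superset {d : ℕ} (F F' : Fan d)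
    (hc : F.IsComplete) (hs : F.IsSimplicial)
    (σ : Set (NR d)) (hσ : σ ∈ F.cones) (hdim : 2 ≤ coneDim σ)
    (x : Fin d → ℤ) (hxσ : toNR x ∈ intrinsicInterior ℝ σ)
    (hgen : ∀ y : Fin d → ℤ, toNR y ∈ coneOf {toNR x} → ∃ k : ℕ, y = k • x)
    (Gσ : Finset (Fin d → ℤ)) (hGσ : (↑Gσ : Set (Fin d → ℤ)) = F.coneGens σ)
    (hsub : F'.IsStarSubdivisionOf F σ x) :
    ∀ P : Finset (Fin d → ℤ), F.IsPrimitiveCollection P → Gσ ⊆ P →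
      F'.IsPrimitiveCollection (insert x (P \ Gσ)) := by
  classical
  intro P hP hGP
  obtain ⟨hPne, hPgen, hPnotc, hPerase⟩ := hP
  have hstar : F'.cones = F.starSub σ x := hsub
  -- structure of σ
  obtain ⟨Sσ, hSσeq, hSσLI, hSσρ⟩ := coneGens_struct hs hσ
  have hSσG : Sσ = Gσ := Finset.coe_injective (by rw [hSσeq, ← hGσ])
  have hGLI : LIset (toNR '' (↑Gσ : Set (Fin d → ℤ))) := by rwa [hSσG] at hSσLI
  have hσeq : σ = coneOf (toNR '' (↑Gσ : Set (Fin d → ℤ))) := by rwa [hSσG] at hSσρ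
  have hGgen : ∀ g ∈ Gσ, g ∈ F.genSet := by
    intro g hg
    have : g ∈ F.coneGens σ := by rw [← hGσ]; exact hg
    exact this.1
  have hgmemσ : ∀ g ∈ Gσ, toNR g ∈ σ := by
    intro g hg
    have : g ∈ F.coneGens σ := by rw [← hGσ]; exact hg
    exact this.2
  have h0σ : (0 : NR d) ∈ σ := by rw [hσeq]; exact zero_mem_coneOf _
  have hxσ' : toNR x ∈ σ := intrinsicInterior_subset hxσ
  -- G is nonempty, in fact has at least 2 elements
  have hGne : Gσ.Nonempty := by
    rw [Finset.nonempty_iff_ne_empty]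
    rintro rfl
    have hzero : coneDim σ = 0 := by
      rw [coneDim, hσeq]
      rw [show toNR '' (↑(∅ : Finset (Fin d → ℤ)) : Set (Fin d → ℤ))
        = (∅ : Set (NR d)) by simp]
      rw [coneOf_empty, Submodule.span_zero_singleton]
      exact finrank_bot ℝ (NR d)
    omega
  have hcard2 : 2 ≤ Gσ.card := by
    have hdim' : coneDim σ ≤ Gσ.card := by
      rw [coneDim, hσeq, span_coneOf]
      have himg : toNR '' (↑Gσ : Set (Fin d → ℤ)) = ↑(Gσ.image toNR) := by
        simp [Finset.coe_image]
      rw [himg]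
      calc Module.finrank ℝ ↥(Submodule.span ℝ (↑(Gσ.image toNR) : Set (NR d)))
          ≤ (Gσ.image toNR).card := finrank_span_finset_le_card _
        _ ≤ Gσ.card := Finset.card_image_le
    omega
  -- positive representation of x over G
  have hrep : ∃ a : (Fin d → ℤ) → ℝ, (∀ g ∈ Gσ, 0 < a g) ∧
      toNR x = ∑ g ∈ Gσ, a g • toNR g := by
    have hx' := hxσ'
    rw [hσeq, mem_coneOf_image] at hx'
    obtain ⟨a, ha, hax⟩ := hx'
    refine ⟨a, fun g hg => ?_, hax⟩
    rcases lt_or_eq_of_le (ha g hg) with h | h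
    · exact h
    exfalso
    obtain ⟨u, hu⟩ := exists_dual (T := Gσ.erase g) (Finset.erase_subset _ _) hGLI
    have hu0 : ∀ z ∈ σ, 0 ≤ u z := by
      intro z hz
      rw [hσeq, mem_coneOf_image] at hz
      obtain ⟨c, hc, rfl⟩ := hz
      rw [map_sum]
      refine Finset.sum_nonneg fun s hsm => ?_
      rw [map_smul, smul_eq_mul, hu s hsm]
      by_cases hse : s ∈ Gσ.erase g
      · rw [if_pos hse, mul_zero]
      · rw [if_neg hse, mul_one]; exact hc s hsm
    have hux : u (toNR x) = 0 := by
      rw [hax, map_sum]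
      refine Finset.sum_eq_zero fun s hsm => ?_
      rw [map_smul, smul_eq_mul, hu s hsm]
      by_cases hsg : s = g
      · subst hsg
        rw [if_neg (Finset.notMem_erase _ _), mul_one, ← h]
      · rw [if_pos (Finset.mem_erase.2 ⟨hsg, hsm⟩), mul_zero]
    have hall := relint_forces_zero h0σ hxσ u hu0 hux
    have := hall _ (hgmemσ g hg)
    rw [hu g hg, if_neg (Finset.notMem_erase _ _)] at this
    exact one_ne_zero this
  obtain ⟨a, hapos, hax⟩ := hrep
  -- x is nonzero
  have hx0 : x ≠ 0 := by
    rintro rfl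
    have hsum0 : ∑ g ∈ Gσ, a g • toNR g = 0 := by
      rw [← hax]; exact toNR_eq_zero.2 rfl
    obtain ⟨g, hg⟩ := hGne
    exact (hapos g hg).ne' (lizZ hGLI hsum0 g hg)
  -- x is primitive
  have hxprim : IsPrimitive x := by
    refine ⟨hx0, ?_⟩
    intro k y hky
    have hkr : toNR x = (k : ℝ) • toNR y := by rw [hky]; exact toNR_zsmul _ _
    have hk0 : k ≠ 0 := by
      rintro rfl
      rw [zero_smul] at hky
      exact hx0 hky
    rcases lt_or_gt_of_ne hk0 with hkneg | hkpos
    · right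
      have hyx : toNR (-y) = ((-k : ℤ) : ℝ)⁻¹ • toNR x := by
        have h1 : toNR x = ((-k : ℤ) : ℝ) • toNR (-y) := by
          rw [show toNR (-y) = ((-1 : ℤ) : ℝ) • toNR y from by
            rw [← toNR_zsmul]; congr 1; funext i; simp]
          rw [hkr, smul_smul]
          congr 1
          push_cast
          ring
        rw [h1, smul_smul, inv_mul_cancel₀ (by
          have : (-k : ℤ) ≠ 0 := by omega
          exact_mod_cast this), one_smul]
      have hym : toNR (-y) ∈ coneOf {toNR x} := by
        rw [mem_coneOf_singleton]
        refine ⟨((-k : ℤ) : ℝ)⁻¹, ?_, hyx⟩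
        have : (0:ℤ) < -k := by omega
        have : (0:ℝ) < ((-k : ℤ) : ℝ) := by exact_mod_cast this
        positivity
      obtain ⟨m, hm⟩ := hgen _ hym
      have hmz : -y = ((m : ℤ)) • x := by rw [hm, natCast_zsmul]
      have hxx : x = ((-k) * (m : ℤ)) • x := by
        rw [mul_smul, ← hmz, hky]
        funext i
        simp
      obtain ⟨i, hi⟩ : ∃ i, x i ≠ 0 := by
        by_contra hcon
        push_neg at hcon
        exact hx0 (funext hcon)
      have : x i = ((-k) * (m : ℤ)) * x i := congrFun hxx i
      have hunit : ((-k) * (m : ℤ)) = 1 := by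
        have h2 : (((-k) * (m : ℤ)) - 1) * x i = 0 := by linarith [this]
        rcases mul_eq_zero.1 h2 with h3 | h3
        · omega
        · exact absurd h3 hi
      have : -k = 1 := by
        rcases Int.isUnit_iff.1 (IsUnit.of_mul_eq_one _ hunit) with h4 | h4
        · exact h4
        · omega
      omega
    · left
      have hyx : toNR y = ((k : ℤ) : ℝ)⁻¹ • toNR x := by
        rw [hkr, smul_smul, inv_mul_cancel₀ (by exact_mod_cast hk0), one_smul]
      have hym : toNR y ∈ coneOf {toNR x} := by
        rw [mem_coneOf_singleton]
        refine ⟨((k : ℤ) : ℝ)⁻¹, ?_, hyx⟩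
        have : (0:ℝ) < ((k : ℤ) : ℝ) := by exact_mod_cast hkpos
        positivity
      obtain ⟨m, hm⟩ := hgen _ hym
      have hmz : y = ((m : ℤ)) • x := by rw [hm, natCast_zsmul]
      have hxx : x = (k * (m : ℤ)) • x := by rw [mul_smul, ← hmz, hky]
      obtain ⟨i, hi⟩ : ∃ i, x i ≠ 0 := by
        by_contra hcon
        push_neg at hcon
        exact hx0 (funext hcon)
      have : x i = (k * (m : ℤ)) * x i := congrFun hxx i
      have hunit : (k * (m : ℤ)) = 1 := by
        have h2 : ((k * (m : ℤ)) - 1) * x i = 0 := by linarith [this]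
        rcases mul_eq_zero.1 h2 with h3 | h3
        · omega
        · exact absurd h3 hi
      rcases Int.isUnit_iff.1 (IsUnit.of_mul_eq_one _ hunit) with h4 | h4
      · exact h4
      · omega
  -- x is not in G
  have hxnotG : x ∉ Gσ := by
    intro hxG
    have hsum : ∑ g ∈ Gσ, (a g - if g = x then 1 else 0) • toNR g = 0 := by
      simp only [sub_smul, Finset.sum_sub_distrib, ← hax]
      rw [sub_eq_zero]
      have : ∀ g ∈ Gσ, (if g = x then (1:ℝ) else 0) • toNR g
          = (if g = x then toNR g else 0) := by
        intro g hg
        by_cases h : g = x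
        · rw [if_pos h, if_pos h, one_smul]
        · rw [if_neg h, if_neg h, zero_smul]
      rw [Finset.sum_congr rfl this]
      rw [show (∑ g ∈ Gσ, if g = x then toNR g else 0)
          = ∑ g ∈ Gσ, if g = x then toNR x else 0 from
        Finset.sum_congr rfl fun g _ => by split_ifs with h; rw [h]; rfl]
      rw [Finset.sum_ite_eq' Gσ x (fun _ => toNR x), if_pos hxG]
    obtain ⟨g2, hg2, hg2x⟩ := Finset.exists_mem_ne (s := Gσ) (by omega) x
    have := lizZ hGLI hsum g2 hg2
    rw [if_neg hg2x, sub_zero] at this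
    exact (hapos g2 hg2).ne' this
  -- x is not in P
  have hxnotP : x ∉ P := by
    intro hxP
    apply hxnotG
    have : x ∈ F.coneGens σ := ⟨hPgen hxP, hxσ'⟩
    rw [← hGσ] at this
    exact this
  -- P \ G is nonempty
  have hPdiff_ne : (P \ Gσ).Nonempty := by
    rw [Finset.nonempty_iff_ne_empty]
    intro hcon
    have hPG : P = Gσ :=
      Finset.Subset.antisymm (Finset.sdiff_eq_empty_iff_subset.1 hcon) hGP
    apply hPnotc
    rw [hPG, ← hσeq]
    exact hσ
  -- the exchange lemma
  have hexch : ∀ (Sτ : Finset (Fin d → ℤ)), Gσ ⊆ Sτ →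
      LIset (toNR '' (↑Sτ : Set (Fin d → ℤ))) → ∀ g0 ∈ Gσ,
      LIset (toNR '' (↑(insert x (Sτ.erase g0)) : Set (Fin d → ℤ))) := by
    intro Sτ hGS hSLI g0 hg0
    have himgLI : LIset (↑(Sτ.image toNR) : Set (NR d)) := by
      have : toNR '' (↑Sτ : Set (Fin d → ℤ)) = ↑(Sτ.image toNR) := by
        simp [Finset.coe_image]
      rwa [this] at hSLI
    have himgerase : toNR '' (↑(Sτ.erase g0) : Set (Fin d → ℤ))
        = ↑((Sτ.image toNR).erase (toNR g0)) := by
      rw [← Finset.image_erase toNR_injective]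
      simp [Finset.coe_image]
    have hxspan : toNR x ∉ Submodule.span ℝ
        (toNR '' (↑(Sτ.erase g0) : Set (Fin d → ℤ))) := by
      intro hmem
      apply not_mem_span_erase himgLI
        (Finset.mem_image_of_mem toNR (hGS hg0))
      rw [← himgerase]
      have hg0span : a g0 • toNR g0 ∈ Submodule.span ℝ
          (toNR '' (↑(Sτ.erase g0) : Set (Fin d → ℤ))) := by
        have hsum : a g0 • toNR g0
            = toNR x - ∑ g ∈ Gσ.erase g0, a g • toNR g := by
          rw [hax, ← Finset.add_sum_erase _ _ hg0]
          ring
        rw [hsum]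
        refine Submodule.sub_mem _ hmem (Submodule.sum_mem _ fun g hg => ?_)
        refine Submodule.smul_mem _ _ (Submodule.subset_span ?_)
        refine ⟨g, ?_, rfl⟩
        have hgm := Finset.mem_erase.1 hg
        exact Finset.mem_coe.2 (Finset.mem_erase.2 ⟨hgm.1, hGS hgm.2⟩)
      have := Submodule.smul_mem _ (a g0)⁻¹ hg0span
      rwa [smul_smul, inv_mul_cancel₀ (hapos g0 hg0).ne', one_smul] at this
    have hset : toNR '' (↑(insert x (Sτ.erase g0)) : Set (Fin d → ℤ))
        = insert (toNR x) (toNR '' (↑(Sτ.erase g0) : Set (Fin d → ℤ))) := by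
      rw [Finset.coe_insert, Set.image_insert_eq]
    rw [hset, LIset]
    have hxnotm : toNR x ∉ toNR '' (↑(Sτ.erase g0) : Set (Fin d → ℤ)) :=
      fun hc => hxspan (Submodule.subset_span hc)
    change LinearIndepOn ℝ id _
    rw [linearIndepOn_id_insert hxnotm]
    constructor
    · exact (show LinearIndepOn ℝ id _ from hSLI).mono (Set.image_mono (by
        exact_mod_cast Finset.erase_subset g0 Sτ))
    · exact hxspan
  -- the ray of x belongs to the star subdivision
  have hrayx : coneOf {toNR x} ∈ F'.cones := by
    obtain ⟨g0, hg0⟩ := hGne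
    rw [hstar]
    right
    refine ⟨σ, hσ, isFaceOf_self, g0, (by rw [← hGσ]; exact hg0), ?_⟩
    have hW : (insert x ((F.coneGens σ \ F.coneGens σ) ∪ (F.coneGens σ \ {g0}))
        : Set (Fin d → ℤ)) = ↑(insert x (Gσ.erase g0)) := by
      rw [← hGσ]
      ext p
      simp [Finset.mem_erase, and_comm]
    rw [hW]
    have hLIW := hexch Gσ Finset.Subset.rfl hGLI g0 hg0
    have hface := isFaceOf_coneOf_subset (T := {x}) (S := insert x (Gσ.erase g0))
      (Finset.singleton_subset_iff.2 (Finset.mem_insert_self _ _)) hLIW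
    have : (toNR '' (↑({x} : Finset (Fin d → ℤ)) : Set (Fin d → ℤ))) = {toNR x} := by simp
    rwa [this] at hface
  -- membership of the generators of P' in the genSet of F'
  have hP'gen : (↑(insert x (P \ Gσ)) : Set (Fin d → ℤ)) ⊆ F'.genSet := by
    intro p hp
    rw [Finset.coe_insert, Set.mem_insert_iff] at hp
    rcases hp with rfl | hp
    · exact ⟨hxprim, hrayx⟩
    · have hpP : p ∈ P := (Finset.mem_sdiff.1 (Finset.mem_coe.1 hp)).1
      have hpgen : p ∈ F.genSet := hPgen hpP
      refine ⟨hpgen.1, ?_⟩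
      rw [hstar]
      left
      refine ⟨hpgen.2, ?_⟩
      intro hcon
      have hsub2 : σ ⊆ coneOf {toNR p} := hcon.subset'
      have hspan : Submodule.span ℝ σ ≤ Submodule.span ℝ ({toNR p} : Set (NR d)) := by
        calc Submodule.span ℝ σ ≤ Submodule.span ℝ (coneOf {toNR p}) :=
              Submodule.span_mono hsub2
          _ = Submodule.span ℝ ({toNR p} : Set (NR d)) := span_coneOf _
      have hfr : coneDim σ ≤ Module.finrank ℝ
          ↥(Submodule.span ℝ ({toNR p} : Set (NR d))) :=
        Submodule.finrank_mono hspan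
      have hp0 : toNR p ≠ 0 := fun hc => hpgen.1.1 (toNR_eq_zero.1 hc)
      rw [finrank_span_singleton hp0] at hfr
      omega
  refine ⟨Finset.insert_nonempty _ _, hP'gen, ?_, ?_⟩
  · -- the cone over P' is NOT in the star subdivision
    intro hcon
    rw [hstar] at hcon
    have hxC : toNR x ∈ coneOf (toNR '' (↑(insert x (P \ Gσ)) : Set (Fin d → ℤ))) :=
      subset_coneOf _ ⟨x, by simp, rfl⟩
    rcases hcon with ⟨hC'F, _⟩ | ⟨τ, hτF, hτface, xi, hxi, hface⟩
    · -- case (i): the cone would be a cone of F containing σ, hence equal to Cone(P)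
      obtain ⟨u, hu, hueq⟩ := F.inter_face σ hσ _ hC'F
      have hux : u (toNR x) = 0 := by
        have hxint : toNR x ∈ σ ∩ coneOf (toNR '' (↑(insert x (P \ Gσ)) :
            Set (Fin d → ℤ))) := ⟨hxσ', hxC⟩
        rw [hueq] at hxint
        exact hxint.2
      have hall := relint_forces_zero h0σ hxσ u hu hux
      have hσsubC : σ ⊆ coneOf (toNR '' (↑(insert x (P \ Gσ)) : Set (Fin d → ℤ))) := by
        intro z hz
        have : z ∈ σ ∩ coneOf (toNR '' (↑(insert x (P \ Gσ)) : Set (Fin d → ℤ))) := by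
          rw [hueq]
          exact ⟨hz, hall z hz⟩
        exact this.2
      have hPC : coneOf (toNR '' (↑P : Set (Fin d → ℤ)))
          = coneOf (toNR '' (↑(insert x (P \ Gσ)) : Set (Fin d → ℤ))) := by
        apply Set.Subset.antisymm
        · apply coneOf_subset_coneOf
          rintro w ⟨p, hp, rfl⟩
          by_cases hpG : p ∈ Gσ
          · exact hσsubC (hgmemσ p hpG)
          · refine subset_coneOf _ ⟨p, ?_, rfl⟩
            rw [Finset.coe_insert, Set.mem_insert_iff]
            exact Or.inr (Finset.mem_coe.2 (Finset.mem_sdiff.2 ⟨Finset.mem_coe.1 hp, hpG⟩))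
        · apply coneOf_subset_coneOf
          rintro w ⟨p, hp, rfl⟩
          rw [Finset.coe_insert, Set.mem_insert_iff] at hp
          rcases hp with rfl | hp
          · have : toNR p ∈ σ := hxσ'
            rw [hσeq] at this
            exact coneOf_mono (Set.image_mono (by exact_mod_cast hGP)) this
          · exact subset_coneOf _ ⟨p, Finset.mem_coe.2
              (Finset.mem_sdiff.1 (Finset.mem_coe.1 hp)).1, rfl⟩
      apply hPnotc
      rw [hPC]
      exact hC'F
    · -- case (ii): the cone would be ⊆ τ, forcing Cone(P) ∈ F
      obtain ⟨Sτ, hSτeq, hSτLI, hτeq⟩ := coneGens_struct hs hτF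
      have hDτ : coneOf (toNR '' (insert x ((F.coneGens τ \ F.coneGens σ)
          ∪ (F.coneGens σ \ {xi})))) ⊆ τ := by
        conv_rhs => rw [hτeq]
        apply coneOf_subset_coneOf
        rintro w ⟨p, hp, rfl⟩
        rw [← hτeq]
        rcases Set.mem_insert_iff.1 hp with rfl | hp2
        · exact hτface.subset' hxσ'
        rcases hp2 with ⟨hpτ, _⟩ | ⟨hpσ, _⟩
        · exact hpτ.2
        · exact hτface.subset' hpσ.2
      have hC'τ : coneOf (toNR '' (↑(insert x (P \ Gσ)) : Set (Fin d → ℤ))) ⊆ τ :=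
        hface.subset'.trans hDτ
      have hPgens : (↑P : Set (Fin d → ℤ)) ⊆ F.coneGens τ := by
        intro p hp
        by_cases hpG : p ∈ Gσ
        · exact ⟨hGgen p hpG, hτface.subset' (hgmemσ p hpG)⟩
        · refine ⟨hPgen hp, ?_⟩
          refine hC'τ (subset_coneOf _ ⟨p, ?_, rfl⟩)
          rw [Finset.coe_insert, Set.mem_insert_iff]
          exact Or.inr (Finset.mem_coe.2
            (Finset.mem_sdiff.2 ⟨Finset.mem_coe.1 hp, hpG⟩))
      have hPsubSτ : P ⊆ Sτ := by
        intro p hp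
        have : p ∈ F.coneGens τ := hPgens (Finset.mem_coe.2 hp)
        rw [← hSτeq] at this
        exact Finset.mem_coe.1 this
      have hPface := isFaceOf_coneOf_subset hPsubSτ hSτLI
      rw [← hτeq] at hPface
      exact hPnotc (F.face_mem τ hτF _ hPface)
  · -- removing any element of P' gives a cone of the star subdivision
    intro z hz
    rcases Finset.mem_insert.1 hz with rfl | hzPG
    · -- removing x
      have hsetx : ((↑(insert z (P \ Gσ)) : Set (Fin d → ℤ)) \ {z}) = ↑(P \ Gσ) := by
        rw [Finset.coe_insert]
        ext p
        simp only [Set.mem_diff, Set.mem_insert_iff, Set.mem_singleton_iff,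
          Finset.mem_coe, Finset.mem_sdiff]
        constructor
        · rintro ⟨hp1 | hp1, hp2⟩
          · exact absurd hp1 hp2
          · exact hp1
        · intro hp
          exact ⟨Or.inr hp, fun hpz => hxnotP (hpz ▸ hp.1)⟩
      rw [hsetx]
      obtain ⟨g0, hg0⟩ := hGne
      have hPg0 : coneOf (toNR '' (↑(P.erase g0) : Set (Fin d → ℤ))) ∈ F.cones := by
        have := hPerase g0 (hGP hg0)
        rwa [← Finset.coe_erase] at this
      have hCG := coneGens_eq_self hs (by
        intro p hp
        exact hPgen (Finset.mem_coe.2 (Finset.mem_of_mem_erase (Finset.mem_coe.1 hp)))) hPg0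
      have hPGsub : P \ Gσ ⊆ P.erase g0 := by
        intro p hp
        have hp' := Finset.mem_sdiff.1 hp
        exact Finset.mem_erase.2 ⟨fun hpg => hp'.2 (hpg ▸ hg0), hp'.1⟩
      have hface := isFaceOf_coneOf_subset hPGsub hCG.2
      have hmemF : coneOf (toNR '' (↑(P \ Gσ) : Set (Fin d → ℤ))) ∈ F.cones :=
        F.face_mem _ hPg0 _ hface
      rw [hstar]
      left
      refine ⟨hmemF, ?_⟩
      intro hcon
      have hσsub : σ ⊆ coneOf (toNR '' (↑(P \ Gσ) : Set (Fin d → ℤ))) := hcon.subset'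
      have hg0mem : toNR g0 ∈ coneOf (toNR '' (↑(P.erase g0) : Set (Fin d → ℤ))) :=
        (coneOf_mono (Set.image_mono (by exact_mod_cast hPGsub)))
          (hσsub (hgmemσ g0 hg0))
      have hg0gens : g0 ∈ F.coneGens (coneOf (toNR '' (↑(P.erase g0) :
          Set (Fin d → ℤ)))) := ⟨hGgen g0 hg0, hg0mem⟩
      rw [← hCG.1] at hg0gens
      exact absurd rfl (Finset.mem_erase.1 (Finset.mem_coe.1 hg0gens)).1
    · -- removing y ∈ P \ G
      set y := z with hydef
      have hyP : y ∈ P := (Finset.mem_sdiff.1 hzPG).1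
      have hynG : y ∉ Gσ := (Finset.mem_sdiff.1 hzPG).2
      have hyne_x : y ≠ x := by
        rintro rfl
        exact hxnotP hyP
      obtain ⟨g0, hg0⟩ := hGne
      have hτF : coneOf (toNR '' (↑(P.erase y) : Set (Fin d → ℤ))) ∈ F.cones := by
        have := hPerase y hyP
        rwa [← Finset.coe_erase] at this
      have hCGτ := coneGens_eq_self hs (by
        intro p hp
        exact hPgen (Finset.mem_coe.2 (Finset.mem_of_mem_erase (Finset.mem_coe.1 hp)))) hτF
      have hGsubPy : Gσ ⊆ P.erase y := by
        intro g hg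
        exact Finset.mem_erase.2 ⟨fun hgy => hynG (hgy ▸ hg), hGP hg⟩
      have hfaceστ : IsFaceOf σ (coneOf (toNR '' (↑(P.erase y) : Set (Fin d → ℤ)))) := by
        rw [hσeq]
        exact isFaceOf_coneOf_subset hGsubPy hCGτ.2
      rw [hstar]
      right
      refine ⟨_, hτF, hfaceστ, g0, (by rw [← hGσ]; exact hg0), ?_⟩
      have hWset : (insert x ((F.coneGens (coneOf (toNR '' (↑(P.erase y) :
          Set (Fin d → ℤ)))) \ F.coneGens σ) ∪ (F.coneGens σ \ {g0}))
          : Set (Fin d → ℤ)) = ↑(insert x ((P.erase y).erase g0)) := by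
        rw [← hCGτ.1, ← hGσ]
        ext p
        simp only [Set.mem_insert_iff, Set.mem_union, Set.mem_diff,
          Set.mem_singleton_iff, Finset.mem_coe, Finset.coe_insert,
          Finset.mem_erase, Finset.mem_insert]
        constructor
        · rintro (rfl | ⟨⟨hp1, hp2⟩, hp3⟩ | ⟨hp1, hp2⟩)
          · exact Or.inl rfl
          · exact Or.inr ⟨fun hpg => hp3 (by rw [hpg]; exact hg0), hp1, hp2⟩
          · refine Or.inr ⟨hp2, ?_⟩
            have := hGsubPy hp1
            exact Finset.mem_erase.1 this
        · rintro (rfl | ⟨hp1, hp2, hp3⟩)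
          · exact Or.inl rfl
          · by_cases hpG : p ∈ Gσ
            · exact Or.inr (Or.inr ⟨hpG, hp1⟩)
            · exact Or.inr (Or.inl ⟨⟨hp2, hp3⟩, hpG⟩)
      rw [hWset]
      have hsety : ((↑(insert x (P \ Gσ)) : Set (Fin d → ℤ)) \ {y})
          = ↑(insert x ((P \ Gσ).erase y)) := by
        ext p
        simp only [Set.mem_diff, Set.mem_singleton_iff, Finset.coe_insert,
          Set.mem_insert_iff, Finset.mem_coe, Finset.mem_sdiff, Finset.mem_erase]
        constructor
        · rintro ⟨rfl | hp1, hp2⟩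
          · exact Or.inl rfl
          · exact Or.inr ⟨hp2, hp1⟩
        · rintro (rfl | ⟨hp1, hp2⟩)
          · exact ⟨Or.inl rfl, hyne_x.symm⟩
          · exact ⟨Or.inr hp2, hp1⟩
      rw [hsety]
      have hLIW := hexch (P.erase y) hGsubPy hCGτ.2 g0 hg0
      have hTsub : insert x ((P \ Gσ).erase y) ⊆ insert x ((P.erase y).erase g0) := by
        apply Finset.insert_subset_insert
        intro p hp
        obtain ⟨hpy, hpPG⟩ := Finset.mem_erase.1 hp
        obtain ⟨hpP, hpG⟩ := Finset.mem_sdiff.1 hpPG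
        exact Finset.mem_erase.2 ⟨fun hpg => hpG (hpg ▸ hg0),
          Finset.mem_erase.2 ⟨hpy, hpP⟩⟩
      exact isFaceOf_coneOf_subset hTsub hLIW
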